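/- Let F be a finite set of points in ℝ², p ∈ int(conv F), and f_p a closest embracing site for p with r_m = dist(p, f_p). Then among the points of F at distance at most r_m from p, there exist two points lying strictly on opposite sides of the line through p and f_p, or two points such that p lies in the interior of the triangle they form with f_p. In particular there exist f_l, f_r ∈ F with dist(p,f_l), dist(p,f_r) ≤ r_m and p ∈ int(conv{f_l, f_p, f_r}). -/

import Mathlib

abbrev Pt := EuclideanSpace ℝ (Fin 2)

lemma Pt.ext2 {v w : Pt} (h0 : v 0 = w 0) (h1 : v 1 = w 1) : v = w := by
  ext i; fin_cases i <;> assumption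

lemma halfplane_contra (s t : ℝ) (hst : s ≠ 0 ∨ t ≠ 0) (p : Pt) (S : Set Pt)
    (hS : ∀ z ∈ S, s * (z 0 - p 0) + t * (z 1 - p 1) ≤ 0)
    (hp : p ∈ interior (convexHull ℝ S)) : False := by
  have hlin : IsLinearMap ℝ (fun z : Pt => s * z 0 + t * z 1) := by
    constructor
    · intro u v; simp [PiLp.add_apply]; ring
    · intro c v; simp [PiLp.smul_apply]; ring
  have hconv : convexHull ℝ S ⊆ {z : Pt | s * z 0 + t * z 1 ≤ s * p 0 + t * p 1} :=
    convexHull_min (fun z hz => by have := hS z hz; simp only [Set.mem_setOf_eq]; linarith)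
      (convex_halfSpace_le hlin _)
  obtain ⟨ε, hε, hball⟩ := Metric.isOpen_iff.1 isOpen_interior p hp
  set w : Pt := (WithLp.equiv 2 (Fin 2 → ℝ)).symm ![s, t] with hw
  have hw0 : w 0 = s := rfl
  have hw1 : w 1 = t := rfl
  have hstsq : 0 < s ^ 2 + t ^ 2 := by
    rcases hst with h | h <;> positivity
  have hwn : 0 < ‖w‖ := by
    rw [norm_pos_iff]
    intro h
    have h0 : s = 0 := by rw [← hw0, h]; rfl
    have h1 : t = 0 := by rw [← hw1, h]; rfl
    rcases hst with hh | hh <;> [exact hh h0; exact hh h1]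
  set c := ε / (2 * ‖w‖) with hc
  have hcpos : 0 < c := by positivity
  have hz : p + c • w ∈ Metric.ball p ε := by
    rw [Metric.mem_ball, dist_eq_norm]
    have : p + c • w - p = c • w := by abel
    rw [this, norm_smul, Real.norm_eq_abs, abs_of_pos hcpos, hc]
    rw [div_mul_eq_mul_div, mul_comm]
    rw [mul_comm (2:ℝ) ‖w‖, ← div_div]
    calc ‖w‖ * ε / ‖w‖ / 2 = ε / 2 := by
          rw [mul_comm, mul_div_assoc, div_self (ne_of_gt hwn), mul_one]
    _ < ε := by linarith
  have hmem := hconv (interior_subset (hball hz))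
  simp only [Set.mem_setOf_eq, PiLp.add_apply, PiLp.smul_apply, hw0, hw1, smul_eq_mul] at hmem
  nlinarith [mul_pos hcpos hstsq]

lemma collinear_of_cross_zero (p g fp : Pt) (hq : fp ≠ p)
    (h : (fp 0 - p 0) * (g 1 - p 1) - (fp 1 - p 1) * (g 0 - p 0) = 0) :
    Collinear ℝ ({p, g, fp} : Set Pt) := by
  set α := fp 0 - p 0 with hα
  set β := fp 1 - p 1 with hβ
  have hab : α ≠ 0 ∨ β ≠ 0 := by
    by_contra hcon
    push_neg at hcon
    exact hq (Pt.ext2 (by have := hcon.1; rw [hα] at this; linarith)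
      (by have := hcon.2; rw [hβ] at this; linarith))
  rw [collinear_iff_of_mem (Set.mem_insert p _)]
  refine ⟨fp - p, ?_⟩
  rintro x (rfl | rfl | rfl)
  · exact ⟨0, by simp⟩
  · obtain ⟨t, ht0, ht1⟩ : ∃ t : ℝ, x 0 - p 0 = t * α ∧ x 1 - p 1 = t * β := by
      rcases hab with ha | hb
      · refine ⟨(x 0 - p 0) / α, by field_simp, ?_⟩
        field_simp
        nlinarith [h]
      · refine ⟨(x 1 - p 1) / β, ?_, by field_simp⟩
        field_simp
        nlinarith [h]
    refine ⟨t, ?_⟩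
    apply Pt.ext2
    · simp only [vadd_eq_add, PiLp.add_apply, PiLp.smul_apply, PiLp.sub_apply, smul_eq_mul]
      rw [← hα]; linarith
    · simp only [vadd_eq_add, PiLp.add_apply, PiLp.smul_apply, PiLp.sub_apply, smul_eq_mul]
      rw [← hβ]; linarith
  · exact ⟨1, by simp⟩

/-- Existence of a closest embracing triangle: if `f_p` is a closest embracing
site for `p` (with `F` in general position, no three points collinear with `p`),
then there exist `f_l, f_r ∈ F` at distance at most `r_m = dist p f_p` from `p`
such that `p` lies in the interior of the triangle `f_l f_p f_r`. -/
theorem exists_CET (F : Finset Pt) (p f_p : Pt) (hf : f_p ∈ F)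
    (hp : p ∈ interior (convexHull ℝ (F : Set Pt)))
    (hemb : p ∈ interior (convexHull ℝ {g : Pt | g ∈ F ∧ dist p g ≤ dist p f_p}))
    (hmin : ∀ f' ∈ F, dist p f' < dist p f_p →
      p ∉ interior (convexHull ℝ {g : Pt | g ∈ F ∧ dist p g ≤ dist p f'}))
    (hgen : ∀ g ∈ F, ∀ h ∈ F, g ≠ h → ¬ Collinear ℝ ({p, g, h} : Set Pt)) :
    ∃ f_l ∈ F, ∃ f_r ∈ F, dist p f_l ≤ dist p f_p ∧ dist p f_r ≤ dist p f_p ∧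
      p ∈ interior (convexHull ℝ ({f_l, f_p, f_r} : Set Pt)) := by
  classical
  set S : Set Pt := {g : Pt | g ∈ F ∧ dist p g ≤ dist p f_p} with hSdef
  -- f_p ≠ p
  have hqne : f_p ≠ p := by
    intro hfp
    apply halfplane_contra 1 0 (Or.inl one_ne_zero) p S ?_ hemb
    intro z hz
    have hz2 : z = p := by
      have h2 := hz.2
      rw [hfp, dist_self] at h2
      exact (dist_le_zero.mp h2).symm
    rw [hz2]; ring_nf
    exact le_refl 0
  set α := f_p 0 - p 0 with hα
  set β := f_p 1 - p 1 with hβ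
  have hab : α ≠ 0 ∨ β ≠ 0 := by
    by_contra hcon
    push_neg at hcon
    exact hqne (Pt.ext2 (by have := hcon.1; rw [hα] at this; linarith)
      (by have := hcon.2; rw [hβ] at this; linarith))
  have hN : 0 < α ^ 2 + β ^ 2 := by rcases hab with h | h <;> positivity
  set X : Pt → ℝ := fun g => α * (g 0 - p 0) + β * (g 1 - p 1) with hX
  set Y : Pt → ℝ := fun g => α * (g 1 - p 1) - β * (g 0 - p 0) with hY
  have hY0 : ∀ g ∈ F, g ≠ f_p → Y g ≠ 0 := by
    intro g hg hne h0
    rcases eq_or_ne g p with rfl | hgp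
    · have hcl := hgen g hg f_p hf hne
      rw [Set.insert_idem] at hcl
      exact hcl (collinear_pair ℝ g f_p)
    · refine hgen g hg f_p hf hne (collinear_of_cross_zero p g f_p hqne ?_)
      simp only [hY] at h0
      rw [hα, hβ] at h0
      linarith
  have hfpY : Y f_p = 0 := by
    simp only [hY]; rw [hα, hβ]; ring
  have hfpX : X f_p = α ^ 2 + β ^ 2 := by
    simp only [hX]; rw [hα, hβ]; ring
  set G : Finset Pt := F.filter (fun g => dist p g ≤ dist p f_p) with hG
  have hGS : ∀ g, g ∈ S ↔ g ∈ G := by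
    intro g; rw [hSdef, Set.mem_setOf_eq, hG, Finset.mem_filter]
  set L := G.filter (fun g => 0 < Y g) with hL
  set R := G.filter (fun g => Y g < 0) with hR
  have hLne : L.Nonempty := by
    rw [Finset.nonempty_iff_ne_empty]
    intro hLe
    apply halfplane_contra (-β) α
      (by rcases hab with h | h; exacts [Or.inr h, Or.inl (neg_ne_zero.mpr h)]) p S ?_ hemb
    intro z hz
    have hzG : z ∈ G := (hGS z).mp hz
    have hnpos : ¬ 0 < Y z := by
      intro hpos
      have : z ∈ L := by rw [hL, Finset.mem_filter]; exact ⟨hzG, hpos⟩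
      rw [hLe] at this; exact absurd this (Finset.notMem_empty z)
    push_neg at hnpos
    simp only [hY] at hnpos
    linarith
  have hRne : R.Nonempty := by
    rw [Finset.nonempty_iff_ne_empty]
    intro hRe
    apply halfplane_contra β (-α)
      (by rcases hab with h | h; exacts [Or.inr (neg_ne_zero.mpr h), Or.inl h]) p S ?_ hemb
    intro z hz
    have hzG : z ∈ G := (hGS z).mp hz
    have hnneg : ¬ Y z < 0 := by
      intro hneg
      have : z ∈ R := by rw [hR, Finset.mem_filter]; exact ⟨hzG, hneg⟩
      rw [hRe] at this; exact absurd this (Finset.notMem_empty z)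
    push_neg at hnneg
    simp only [hY] at hnneg
    linarith
  obtain ⟨a, haL, haMin⟩ := L.exists_min_image (fun g => X g / Y g) hLne
  obtain ⟨b, hbR, hbMax⟩ := R.exists_max_image (fun g => X g / Y g) hRne
  have haG : a ∈ G := (Finset.mem_filter.mp haL).1
  have hYa : 0 < Y a := (Finset.mem_filter.mp haL).2
  have hbG : b ∈ G := (Finset.mem_filter.mp hbR).1
  have hYb : Y b < 0 := (Finset.mem_filter.mp hbR).2
  have haF : a ∈ F := (Finset.mem_filter.mp haG).1
  have had : dist p a ≤ dist p f_p := (Finset.mem_filter.mp haG).2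
  have hbF : b ∈ F := (Finset.mem_filter.mp hbG).1
  have hbd : dist p b ≤ dist p f_p := (Finset.mem_filter.mp hbG).2
  have hanefp : a ≠ f_p := by
    intro h; rw [h, hfpY] at hYa; exact lt_irrefl 0 hYa
  have hbnefp : b ≠ f_p := by
    intro h; rw [h, hfpY] at hYb; exact lt_irrefl 0 hYb
  clear_value S G L R X Y α β
  clear hmin hp
  -- the key determinant is positive
  have hD : 0 < X a * Y b - Y a * X b := by
    by_contra hD'
    push_neg at hD'
    apply halfplane_contra (α * Y b + β * X b) (β * Y b - α * X b) ?_ p S ?_ hemb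
    · by_contra hc
      push_neg at hc
      have hcomb : (α ^ 2 + β ^ 2) * Y b
          = α * (α * Y b + β * X b) + β * (β * Y b - α * X b) := by ring
      rw [hc.1, hc.2] at hcomb
      simp only [mul_zero, add_zero] at hcomb
      nlinarith [mul_pos hN (neg_pos.mpr hYb)]
    · intro z hz
      have hz' := hz
      rw [hSdef] at hz'
      have hzF : z ∈ F := hz'.1
      have hgeq : (α * Y b + β * X b) * (z 0 - p 0) + (β * Y b - α * X b) * (z 1 - p 1)
          = X z * Y b - Y z * X b := by simp only [hX, hY]; ring
      rw [hgeq]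
      rcases lt_trichotomy (Y z) 0 with hz0 | hz0 | hz0
      · have hzR : z ∈ R := by rw [hR, Finset.mem_filter]; exact ⟨(hGS z).mp hz, hz0⟩
        have hdiv : X z / Y z ≤ X b / Y b := hbMax z hzR
        have h2 : (-X z) / (-Y z) ≤ (-X b) / (-Y b) := by
          rw [neg_div_neg_eq, neg_div_neg_eq]; exact hdiv
        rw [div_le_div_iff₀ (by linarith) (by linarith)] at h2
        nlinarith [h2]
      · have hzfp : z = f_p := by
          by_contra hne
          exact hY0 z hzF hne hz0
        rw [hzfp, hfpX, hfpY]
        nlinarith [mul_pos hN (neg_pos.mpr hYb)]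
      · have hzL : z ∈ L := by rw [hL, Finset.mem_filter]; exact ⟨(hGS z).mp hz, hz0⟩
        have hdiv : X a / Y a ≤ X z / Y z := haMin z hzL
        rw [div_le_div_iff₀ hYa hz0] at hdiv
        nlinarith [mul_le_mul_of_nonneg_right hD' (le_of_lt hz0),
          mul_le_mul_of_nonneg_right hdiv (neg_nonneg.mpr (le_of_lt hYb)), hYa]
  -- the coefficients
  set c1 := (α ^ 2 + β ^ 2) * (-Y b) with hc1
  set c2 := X a * Y b - Y a * X b with hc2
  set c3 := (α ^ 2 + β ^ 2) * Y a with hc3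
  have hc1p : 0 < c1 := by rw [hc1]; exact mul_pos hN (neg_pos.mpr hYb)
  have hc2p : 0 < c2 := hD
  have hc3p : 0 < c3 := by rw [hc3]; exact mul_pos hN hYa
  have hsum : 0 < c1 + c2 + c3 := by linarith
  have hvec : c1 • (a - p) + c2 • (f_p - p) + c3 • (b - p) = (0 : Pt) := by
    apply Pt.ext2
    · simp only [PiLp.add_apply, PiLp.smul_apply, PiLp.sub_apply, PiLp.zero_apply, smul_eq_mul]
      rw [hc1, hc2, hc3]
      simp only [hX, hY]
      rw [hα, hβ]
      ring
    · simp only [PiLp.add_apply, PiLp.smul_apply, PiLp.sub_apply, PiLp.zero_apply, smul_eq_mul]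
      rw [hc1, hc2, hc3]
      simp only [hX, hY]
      rw [hα, hβ]
      ring
  have hpt : c1 • a + c2 • f_p + c3 • b = (c1 + c2 + c3) • p := by
    have h := hvec
    simp only [smul_sub] at h
    rw [add_smul, add_smul]
    have h2 : c1 • a + c2 • f_p + c3 • b - (c1 • p + c2 • p + c3 • p) = 0 := by
      rw [← h]; abel
    have h3 := sub_eq_zero.mp h2
    rw [h3]
  clear_value c1 c2 c3
  set w : Fin 3 → ℝ := ![c1 / (c1 + c2 + c3), c2 / (c1 + c2 + c3), c3 / (c1 + c2 + c3)] with hwdef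
  have hw1 : ∑ i, w i = 1 := by
    rw [hwdef, Fin.sum_univ_three]
    simp only [Matrix.cons_val_zero, Matrix.cons_val_one, Matrix.head_cons,
      Matrix.cons_val_two, Matrix.tail_cons]
    rw [← add_div, ← add_div, div_self (ne_of_gt hsum)]
  have hcomb : Finset.univ.affineCombination ℝ ![a, f_p, b] w = p := by
    rw [Finset.affineCombination_eq_linear_combination _ _ _ hw1]
    rw [Fin.sum_univ_three]
    simp only [hwdef, Matrix.cons_val_zero, Matrix.cons_val_one, Matrix.head_cons,
      Matrix.cons_val_two, Matrix.tail_cons]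
    have hstep : (c1 / (c1 + c2 + c3)) • a + (c2 / (c1 + c2 + c3)) • f_p
        + (c3 / (c1 + c2 + c3)) • b = (c1 + c2 + c3)⁻¹ • (c1 • a + c2 • f_p + c3 • b) := by
      rw [div_eq_inv_mul, div_eq_inv_mul, div_eq_inv_mul, mul_smul, mul_smul, mul_smul,
        smul_add, smul_add]
    rw [hstep, hpt, smul_smul, inv_mul_cancel₀ (ne_of_gt hsum), one_smul]
  have hrange : Set.range ![a, f_p, b] = ({a, f_p, b} : Set Pt) := by
    ext x
    simp only [Set.mem_range, Set.mem_insert_iff, Set.mem_singleton_iff]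
    constructor
    · rintro ⟨i, rfl⟩
      fin_cases i <;> simp
    · rintro (rfl | rfl | rfl)
      exacts [⟨0, rfl⟩, ⟨1, rfl⟩, ⟨2, rfl⟩]
  have hnotcol : ¬ Collinear ℝ ({a, f_p, b} : Set Pt) := by
    intro hcol
    have hmem : p ∈ affineSpan ℝ ({a, f_p, b} : Set Pt) := by
      rw [← hrange, ← hcomb]
      exact affineCombination_mem_affineSpan hw1 _
    have hcol2 : Collinear ℝ (insert p ({a, f_p, b} : Set Pt)) :=
      (collinear_insert_iff_of_mem_affineSpan hmem).2 hcol
    have hsub : ({p, a, f_p} : Set Pt) ⊆ insert p ({a, f_p, b} : Set Pt) := by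
      intro x hx
      rcases hx with rfl | rfl | rfl
      · exact Set.mem_insert _ _
      · exact Set.mem_insert_of_mem _ (Set.mem_insert _ _)
      · exact Set.mem_insert_of_mem _ (Set.mem_insert_of_mem _ (Set.mem_insert _ _))
    exact hgen a haF f_p hf hanefp (hcol2.subset hsub)
  have hind : AffineIndependent ℝ ![a, f_p, b] :=
    affineIndependent_iff_not_collinear_set.mpr hnotcol
  have htop : affineSpan ℝ (Set.range ![a, f_p, b]) = ⊤ := by
    rw [hind.affineSpan_eq_top_iff_card_eq_finrank_add_one]
    simp [finrank_euclideanSpace_fin]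
  let B : AffineBasis (Fin 3) ℝ Pt := ⟨![a, f_p, b], hind, htop⟩
  have hBcoe : ⇑B = ![a, f_p, b] := rfl
  refine ⟨a, haF, b, hbF, had, hbd, ?_⟩
  have hint := B.interior_convexHull
  rw [hBcoe, hrange] at hint
  rw [hint]
  intro i
  have hco : B.coord i p = w i := by
    conv_lhs => rw [← hcomb]
    exact B.coord_apply_combination_of_mem (Finset.mem_univ i) hw1
  rw [hco]
  fin_cases i
  · exact div_pos hc1p hsum
  · exact div_pos hc2p hsum
  · exact div_pos hc3p hsum
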